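/- There exists a Boolean function f on n = k^2 variables (the modified Rubinstein function, k a perfect square) with bs(f) = fbs(f) = C(f) = k^{3/2}, such that for every restriction ρ leaving at most c·k^{3/2} variables unset (for a fixed constant c), C(f|_ρ) = O(k). Consequently bs, fbs, and C cannot be condensed losslessly. -/

import Mathlib

open Finset

section Core
variable {ι : Type} [Fintype ι] [DecidableEq ι]

/-- Flip the bits of `x` indexed by the block `B`. -/
def flipSet (x : ι → Bool) (B : Finset ι) : ι → Bool :=
  fun i => if i ∈ B then !(x i) else x i

/-- Sensitivity of `f` at input `x`. -/
def sensAt (f : (ι → Bool) → Bool) (x : ι → Bool) : ℕ :=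
  (univ.filter fun i => f (flipSet x {i}) ≠ f x).card

/-- Sensitivity of `f`. -/
def sens (f : (ι → Bool) → Bool) : ℕ :=
  univ.sup fun x => sensAt f x

/-- Block sensitivity of `f` at `x`: the maximal number of pairwise disjoint
sensitive blocks at `x`. -/
noncomputable def bsAt (f : (ι → Bool) → Bool) (x : ι → Bool) : ℕ :=
  sSup {r | ∃ B : Fin r → Finset ι,
    (∀ j, f (flipSet x (B j)) ≠ f x) ∧
    ∀ j₁ j₂, j₁ ≠ j₂ → Disjoint (B j₁) (B j₂)}

/-- Block sensitivity of `f`. -/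
noncomputable def blockSens (f : (ι → Bool) → Bool) : ℕ :=
  univ.sup fun x => bsAt f x

/-- `S` is a certificate for `f` at `x`: every input agreeing with `x` on `S`
 has the same `f`-value as `x`. -/
def IsCert (f : (ι → Bool) → Bool) (x : ι → Bool) (S : Finset ι) : Prop :=
  ∀ y : ι → Bool, (∀ i ∈ S, y i = x i) → f y = f x

/-- Certificate complexity of `f` at `x`. -/
noncomputable def certAt (f : (ι → Bool) → Bool) (x : ι → Bool) : ℕ :=
  sInf {c | ∃ S : Finset ι, S.card = c ∧ IsCert f x S}

/-- Certificate complexity of `f`. -/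
noncomputable def certC (f : (ι → Bool) → Bool) : ℕ :=
  univ.sup fun x => certAt f x

/-- 0-certificate complexity of `f`. -/
noncomputable def cert0 (f : (ι → Bool) → Bool) : ℕ :=
  (univ.filter fun x => f x = false).sup fun x => certAt f x

/-- 1-certificate complexity of `f`. -/
noncomputable def cert1 (f : (ι → Bool) → Bool) : ℕ :=
  (univ.filter fun x => f x = true).sup fun x => certAt f x

/-- The restriction of `f` by the partial assignment `ρ` (a variable `i` with
`ρ i = none` is left unset; otherwise it is fixed to the given value). The
restricted function depends only on the unset variables. -/
def restrictBF (f : (ι → Bool) → Bool) (ρ : ι → Option Bool) : (ι → Bool) → Bool :=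
  fun x => f fun i => (ρ i).getD (x i)

/-- Number of unset variables of a partial assignment. -/
def unsetCard (ρ : ι → Option Bool) : ℕ :=
  (univ.filter fun i => ρ i = none).card

end Core

/-- The function on `{0,1}^{m²}` that is `1` iff the input consists of exactly
`m = √(m²)` consecutive ones and zeroes elsewhere. -/
def consecOnes (m : ℕ) : (Fin (m ^ 2) → Bool) → Bool :=
  fun y => decide (∃ s : Fin (m ^ 2 + 1), (s : ℕ) + m ≤ m ^ 2 ∧
    ∀ j : Fin (m ^ 2), (y j = true ↔ (s : ℕ) ≤ (j : ℕ) ∧ (j : ℕ) < (s : ℕ) + m))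

/-- The modified Rubinstein function: `OR` of `m²` independent copies of
`consecOnes m`, a function on `(m²)² = m⁴` variables. -/
def modRub (m : ℕ) : (Fin (m ^ 2) × Fin (m ^ 2) → Bool) → Bool :=
  fun x => decide (∃ i : Fin (m ^ 2), consecOnes m (fun j => x (i, j)) = true)

/-- Fractional block sensitivity of `f` at `x` (the value of the LP relaxation
of block sensitivity). -/
noncomputable def fbsAt {ι : Type} [Fintype ι] [DecidableEq ι]
    (f : (ι → Bool) → Bool) (x : ι → Bool) : ℝ :=
  sSup {v : ℝ | ∃ y : Finset ι → ℝ,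
    (∀ B, 0 ≤ y B) ∧
    (∀ B, f (flipSet x B) = f x → y B = 0) ∧
    (∀ i : ι, (∑ B : Finset ι, if i ∈ B then y B else 0) ≤ 1) ∧
    v = ∑ B : Finset ι, y B}

/-- Fractional block sensitivity of `f`. -/
noncomputable def fbs {ι : Type} [Fintype ι] [DecidableEq ι]
    (f : (ι → Bool) → Bool) : ℝ :=
  Finset.univ.sup' Finset.univ_nonempty (fbsAt f)

section Generic
variable {ι : Type} [Fintype ι] [DecidableEq ι]

lemma flipSet_empty (x : ι → Bool) : flipSet x ∅ = x := by
  funext i; simp [flipSet]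

lemma isCert_univ (f : (ι → Bool) → Bool) (x : ι → Bool) : IsCert f x univ := by
  intro y hy
  have : y = x := funext fun i => hy i (mem_univ i)
  rw [this]

lemma certSet_nonempty (f : (ι → Bool) → Bool) (x : ι → Bool) :
    {c | ∃ S : Finset ι, S.card = c ∧ IsCert f x S}.Nonempty :=
  ⟨_, univ, rfl, isCert_univ f x⟩

lemma exists_min_cert (f : (ι → Bool) → Bool) (x : ι → Bool) :
    ∃ S : Finset ι, S.card = certAt f x ∧ IsCert f x S :=
  Nat.sInf_mem (certSet_nonempty f x)

lemma certAt_le_of_isCert {f : (ι → Bool) → Bool} {x : ι → Bool} {S : Finset ι}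
    (h : IsCert f x S) : certAt f x ≤ S.card :=
  Nat.sInf_le ⟨S, rfl, h⟩

lemma block_meets_cert {f : (ι → Bool) → Bool} {x : ι → Bool} {S B : Finset ι}
    (hS : IsCert f x S) (hB : f (flipSet x B) ≠ f x) : ∃ i, i ∈ B ∧ i ∈ S := by
  by_contra h
  push_neg at h
  refine hB (hS _ fun i hi => ?_)
  have hni : i ∉ B := fun hb => h i hb hi
  simp [flipSet, hni]

lemma bs_set_mem_le {f : (ι → Bool) → Bool} {x : ι → Bool} {r : ℕ}
    (hr : r ∈ {r | ∃ B : Fin r → Finset ι,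
      (∀ j, f (flipSet x (B j)) ≠ f x) ∧
      ∀ j₁ j₂, j₁ ≠ j₂ → Disjoint (B j₁) (B j₂)}) :
    r ≤ certAt f x := by
  obtain ⟨S, hcard, hS⟩ := exists_min_cert f x
  obtain ⟨B, hsens, hdisj⟩ := hr
  choose φ hφB hφS using fun j => block_meets_cert hS (hsens j)
  have hinj : Function.Injective φ := by
    intro j₁ j₂ h
    by_contra hne
    exact Finset.disjoint_left.mp (hdisj j₁ j₂ hne) (hφB j₁) (h ▸ hφB j₂)
  calc r = Fintype.card (Fin r) := (Fintype.card_fin r).symm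
    _ ≤ S.card := by
        rw [← Fintype.card_coe]
        exact Fintype.card_le_of_injective (fun j => ⟨φ j, hφS j⟩)
          fun a b hab => hinj (by simpa using hab)
    _ = certAt f x := hcard

lemma bs_set_nonempty (f : (ι → Bool) → Bool) (x : ι → Bool) :
    (0 : ℕ) ∈ {r | ∃ B : Fin r → Finset ι,
      (∀ j, f (flipSet x (B j)) ≠ f x) ∧
      ∀ j₁ j₂, j₁ ≠ j₂ → Disjoint (B j₁) (B j₂)} :=
  ⟨fun j => j.elim0, fun j => j.elim0, fun j => j.elim0⟩

lemma bsAt_le_certAt (f : (ι → Bool) → Bool) (x : ι → Bool) :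
    bsAt f x ≤ certAt f x :=
  csSup_le ⟨0, bs_set_nonempty f x⟩ fun _ hr => bs_set_mem_le hr

lemma certAt_le_bsAt_lower {f : (ι → Bool) → Bool} {x : ι → Bool} {N : ℕ}
    (B : Fin N → Finset ι)
    (hsens : ∀ j, f (flipSet x (B j)) ≠ f x)
    (hdisj : ∀ j₁ j₂, j₁ ≠ j₂ → Disjoint (B j₁) (B j₂)) :
    N ≤ bsAt f x :=
  le_csSup ⟨certAt f x, fun _ hr => bs_set_mem_le hr⟩ ⟨B, hsens, hdisj⟩

lemma fbs_set_zero_mem (f : (ι → Bool) → Bool) (x : ι → Bool) :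
    (0 : ℝ) ∈ {v : ℝ | ∃ y : Finset ι → ℝ,
      (∀ B, 0 ≤ y B) ∧
      (∀ B, f (flipSet x B) = f x → y B = 0) ∧
      (∀ i : ι, (∑ B : Finset ι, if i ∈ B then y B else 0) ≤ 1) ∧
      v = ∑ B : Finset ι, y B} :=
  ⟨fun _ => 0, fun _ => le_refl 0, fun _ _ => rfl, fun i => by simp, by simp⟩

lemma fbs_set_mem_le {f : (ι → Bool) → Bool} {x : ι → Bool} {v : ℝ}
    (hv : v ∈ {v : ℝ | ∃ y : Finset ι → ℝ,
      (∀ B, 0 ≤ y B) ∧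
      (∀ B, f (flipSet x B) = f x → y B = 0) ∧
      (∀ i : ι, (∑ B : Finset ι, if i ∈ B then y B else 0) ≤ 1) ∧
      v = ∑ B : Finset ι, y B}) :
    v ≤ (certAt f x : ℝ) := by
  obtain ⟨S, hcard, hS⟩ := exists_min_cert f x
  obtain ⟨y, hpos, hzero, hpack, hv⟩ := hv
  have key : ∀ B : Finset ι, y B ≤ ∑ i ∈ S, (if i ∈ B then y B else 0) := by
    intro B
    by_cases hB : f (flipSet x B) = f x
    · rw [hzero B hB]
      exact Finset.sum_nonneg fun i _ => by by_cases h : i ∈ B <;> simp [h, hpos B]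
    · obtain ⟨i₀, hi₀B, hi₀S⟩ := block_meets_cert hS hB
      have := Finset.single_le_sum (f := fun i => if i ∈ B then y B else 0)
        (fun i _ => by by_cases h : i ∈ B <;> simp [h, hpos B]) hi₀S
      simpa [hi₀B] using this
  calc v = ∑ B : Finset ι, y B := hv
    _ ≤ ∑ B : Finset ι, ∑ i ∈ S, (if i ∈ B then y B else 0) :=
        Finset.sum_le_sum fun B _ => key B
    _ = ∑ i ∈ S, ∑ B : Finset ι, (if i ∈ B then y B else 0) := Finset.sum_comm
    _ ≤ ∑ i ∈ S, 1 := Finset.sum_le_sum fun i _ => hpack i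
    _ = (S.card : ℝ) := by simp
    _ = (certAt f x : ℝ) := by rw [hcard]

lemma fbsAt_le_certAt (f : (ι → Bool) → Bool) (x : ι → Bool) :
    fbsAt f x ≤ (certAt f x : ℝ) :=
  csSup_le ⟨0, fbs_set_zero_mem f x⟩ fun _ hv => fbs_set_mem_le hv

lemma certAt_le_fbsAt_lower {f : (ι → Bool) → Bool} {x : ι → Bool} {N : ℕ}
    (B : Fin N → Finset ι)
    (hsens : ∀ j, f (flipSet x (B j)) ≠ f x)
    (hdisj : ∀ j₁ j₂, j₁ ≠ j₂ → Disjoint (B j₁) (B j₂)) :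
    (N : ℝ) ≤ fbsAt f x := by
  have hne : ∀ j, (B j).Nonempty := by
    intro j
    rcases Finset.eq_empty_or_nonempty (B j) with h | h
    · exact absurd (by rw [h, flipSet_empty]) (hsens j)
    · exact h
  have hinj : Function.Injective B := by
    intro j₁ j₂ h
    by_contra hne'
    obtain ⟨i, hi⟩ := hne j₁
    exact Finset.disjoint_left.mp (hdisj j₁ j₂ hne') hi (h ▸ hi)
  set img : Finset (Finset ι) := Finset.image B Finset.univ with himg
  have hcardimg : img.card = N := by
    rw [himg, Finset.card_image_of_injective _ hinj, Finset.card_univ, Fintype.card_fin]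
  apply le_csSup ⟨(certAt f x : ℝ), fun _ hv => fbs_set_mem_le hv⟩
  refine ⟨fun C => if C ∈ img then 1 else 0, fun C => by positivity, ?_, ?_, ?_⟩
  · intro C hC
    simp only [ite_eq_right_iff, one_ne_zero]
    intro hmem
    obtain ⟨j, _, rfl⟩ := Finset.mem_image.mp hmem
    exact absurd hC (hsens j)
  · intro i
    have : ∀ C : Finset ι, (if i ∈ C then (if C ∈ img then (1:ℝ) else 0) else 0)
        = if C ∈ img.filter (fun C => i ∈ C) then 1 else 0 := by
      intro C
      by_cases h1 : i ∈ C <;> by_cases h2 : C ∈ img <;> simp [h1, h2]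
    rw [Finset.sum_congr rfl fun C _ => this C]
    rw [Finset.sum_ite_mem]
    have hsub : Finset.univ ∩ img.filter (fun C => i ∈ C) = img.filter (fun C => i ∈ C) := by
      simp
    rw [hsub, Finset.sum_const, nsmul_eq_mul, mul_one]
    have hle1 : (img.filter (fun C => i ∈ C)).card ≤ 1 := by
      apply Finset.card_le_one.mpr
      intro C₁ h₁ C₂ h₂
      simp only [Finset.mem_filter, himg, Finset.mem_image] at h₁ h₂
      obtain ⟨⟨j₁, _, rfl⟩, hiC₁⟩ := h₁
      obtain ⟨⟨j₂, _, rfl⟩, hiC₂⟩ := h₂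
      congr 1
      by_contra hne'
      exact absurd hiC₂ (Finset.disjoint_left.mp (hdisj j₁ j₂ hne') hiC₁)
    exact_mod_cast hle1
  · rw [Finset.sum_ite_mem]
    have : Finset.univ ∩ img = img := by simp
    rw [this, Finset.sum_const, nsmul_eq_mul, mul_one, hcardimg]

end Generic
section Specific
variable {m : ℕ}

lemma consecOnes_eq_true_iff {y : Fin (m^2) → Bool} :
    consecOnes m y = true ↔ ∃ s : ℕ, s + m ≤ m^2 ∧
      ∀ j : Fin (m^2), (y j = true ↔ s ≤ (j:ℕ) ∧ (j:ℕ) < s + m) := by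
  simp only [consecOnes, decide_eq_true_eq]
  constructor
  · rintro ⟨s, hs, hw⟩; exact ⟨(s:ℕ), hs, hw⟩
  · rintro ⟨s, hs, hw⟩; exact ⟨⟨s, by omega⟩, hs, hw⟩

lemma consecOnes_false_of_all_false (hm : 1 ≤ m) {y : Fin (m^2) → Bool}
    (h : ∀ j, y j = false) : consecOnes m y = false := by
  rw [Bool.eq_false_iff]
  intro htrue
  obtain ⟨s, hs, hw⟩ := consecOnes_eq_true_iff.mp htrue
  have hj : s < m^2 := by omega
  have := (hw ⟨s, hj⟩).mpr (by simp only [Fin.val_mk]; omega)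
  simp [h ⟨s, hj⟩] at this

lemma modRub_eq_true_iff {x : Fin (m^2) × Fin (m^2) → Bool} :
    modRub m x = true ↔ ∃ i, consecOnes m (fun j => x (i, j)) = true := by
  simp [modRub]

lemma modRub_zero (hm : 1 ≤ m) : modRub m (fun _ => false) = false := by
  rw [Bool.eq_false_iff]
  intro htrue
  obtain ⟨i, hi⟩ := modRub_eq_true_iff.mp htrue
  rw [consecOnes_false_of_all_false hm (fun _ => rfl)] at hi
  exact Bool.false_ne_true hi

/-- The sensitive block: row `a`, interval `[t·m, t·m + m)`. -/
def blk (m : ℕ) (a : Fin (m^2)) (t : Fin m) : Finset (Fin (m^2) × Fin (m^2)) :=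
  Finset.univ.filter fun p => p.1 = a ∧ (t:ℕ)*m ≤ (p.2:ℕ) ∧ (p.2:ℕ) < (t:ℕ)*m + m

lemma blk_flip_row (a : Fin (m^2)) (t : Fin m) :
    consecOnes m (fun j => flipSet (fun _ => false) (blk m a t) (a, j)) = true := by
  rw [consecOnes_eq_true_iff]
  refine ⟨(t:ℕ)*m, ?_, ?_⟩
  · have h1 : ((t:ℕ)+1) * m ≤ m * m := Nat.mul_le_mul_right m (by omega)
    rw [add_mul, one_mul] at h1
    have : m^2 = m * m := sq m
    omega
  · intro j
    simp only [flipSet, blk, Finset.mem_filter, Finset.mem_univ, true_and]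
    by_cases hb : (t:ℕ)*m ≤ (j:ℕ) ∧ (j:ℕ) < (t:ℕ)*m + m
    · simp [hb]
    · simp [hb]

lemma blk_sensitive (hm : 1 ≤ m) (a : Fin (m^2)) (t : Fin m) :
    modRub m (flipSet (fun _ => false) (blk m a t)) ≠ modRub m (fun _ => false) := by
  rw [modRub_zero hm]
  rw [modRub_eq_true_iff.mpr ⟨a, blk_flip_row a t⟩]
  exact fun h => Bool.false_ne_true h.symm

lemma blk_disjoint {a a' : Fin (m^2)} {t t' : Fin m} (h : (a, t) ≠ (a', t')) :
    Disjoint (blk m a t) (blk m a' t') := by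
  rw [Finset.disjoint_left]
  rintro p hp hp'
  simp only [blk, Finset.mem_filter, Finset.mem_univ, true_and] at hp hp'
  obtain ⟨h1, h2, h3⟩ := hp
  obtain ⟨h1', h2', h3'⟩ := hp'
  have haa : a = a' := h1 ▸ h1'
  have htt : t ≠ t' := fun htt' => h (by rw [haa, htt'])
  have htn : (t:ℕ) ≠ (t':ℕ) := fun hn => htt (Fin.ext hn)
  rcases Nat.lt_or_ge (t:ℕ) (t':ℕ) with hlt | hge
  · have h4 : ((t:ℕ)+1) * m ≤ (t':ℕ) * m := Nat.mul_le_mul_right m (by omega)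
    rw [add_mul, one_mul] at h4
    omega
  · have hlt : (t':ℕ) < (t:ℕ) := by omega
    have h4 : ((t':ℕ)+1) * m ≤ (t:ℕ) * m := Nat.mul_le_mul_right m (by omega)
    rw [add_mul, one_mul] at h4
    omega

lemma modRub_blocks (hm : 1 ≤ m) :
    ∃ B : Fin (m^2*m) → Finset (Fin (m^2) × Fin (m^2)),
      (∀ j, modRub m (flipSet (fun _ => false) (B j)) ≠ modRub m (fun _ => false)) ∧
      ∀ j₁ j₂, j₁ ≠ j₂ → Disjoint (B j₁) (B j₂) := by
  refine ⟨fun j => blk m (finProdFinEquiv.symm j).1 (finProdFinEquiv.symm j).2,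
    fun j => blk_sensitive hm _ _, fun j₁ j₂ hne => ?_⟩
  apply blk_disjoint
  intro heq
  apply hne
  apply finProdFinEquiv.symm.injective
  exact Prod.ext_iff.mpr ⟨congrArg Prod.fst heq, congrArg Prod.snd heq⟩

end Specific
section RowCert
variable {m : ℕ}

/-- Counting function: number of unset positions `≤ t`. -/
def cntU (U : Finset (Fin (m^2))) (t : ℕ) : ℕ :=
  (U.filter fun j' : Fin (m^2) => (j':ℕ) ≤ t).card

lemma cntU_step (U : Finset (Fin (m^2))) (t : ℕ) (ht : t + 1 < m^2)
    (hmem : (⟨t+1, ht⟩ : Fin (m^2)) ∈ U) : cntU U (t+1) = cntU U t + 1 := by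
  unfold cntU
  have hkey : U.filter (fun j' : Fin (m^2) => (j':ℕ) ≤ t+1)
      = insert (⟨t+1, ht⟩ : Fin (m^2)) (U.filter fun j' : Fin (m^2) => (j':ℕ) ≤ t) := by
    ext j
    simp only [Finset.mem_filter, Finset.mem_insert]
    constructor
    · rintro ⟨hjU, hj⟩
      rcases Nat.lt_or_ge (j:ℕ) (t+1) with h | h
      · exact Or.inr ⟨hjU, by omega⟩
      · exact Or.inl (Fin.ext (by simp only [Fin.val_mk]; omega))
    · rintro (rfl | ⟨hjU, hj⟩)
      · exact ⟨hmem, le_refl _⟩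
      · exact ⟨hjU, by omega⟩
  rw [hkey, Finset.card_insert_of_notMem]
  simp only [Finset.mem_filter, Fin.val_mk]
  omega

lemma cntU_strict_mono {U : Finset (Fin (m^2))} {j j' : Fin (m^2)}
    (hj : j ∈ U) (hj' : j' ∈ U) (h : (j:ℕ) < (j':ℕ)) :
    cntU U (j:ℕ) < cntU U (j':ℕ) := by
  apply Finset.card_lt_card
  constructor
  · intro a ha
    simp only [Finset.mem_filter] at ha ⊢
    exact ⟨ha.1, by omega⟩
  · intro hsub
    have := hsub (Finset.mem_filter.mpr ⟨hj', le_refl _⟩)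
    simp only [Finset.mem_filter] at this
    omega

lemma cntU_pos {U : Finset (Fin (m^2))} {j : Fin (m^2)} (hj : j ∈ U) :
    1 ≤ cntU U (j:ℕ) := by
  apply Finset.card_pos.mpr
  exact ⟨j, Finset.mem_filter.mpr ⟨hj, le_refl _⟩⟩

lemma cntU_le_card (U : Finset (Fin (m^2))) (t : ℕ) : cntU U t ≤ U.card :=
  Finset.card_filter_le _ _

/-- Certificate for an all-zero row: pick every `m`-th unset position. -/
lemma row_cert_zero (hm : 1 ≤ m) (w : Fin (m^2) → Bool) (U : Finset (Fin (m^2)))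
    (hall : ∀ p, w p = false) :
    ∃ S : Finset (Fin (m^2)), S ⊆ U ∧ m * S.card ≤ U.card ∧
      ∀ y : Fin (m^2) → Bool, (∀ j ∈ S, y j = w j) → (∀ j ∉ U, y j = w j) →
        consecOnes m y = false := by
  classical
  set S : Finset (Fin (m^2)) := U.filter (fun j => cntU U (j:ℕ) % m = 0) with hSdef
  have hSU : S ⊆ U := Finset.filter_subset _ _
  refine ⟨S, hSU, ?_, ?_⟩
  · -- cardinality: m * S.card ≤ U.card
    have h1 : S.card ≤ ((Finset.Icc 1 U.card).filter fun t => t % m = 0).card := by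
      refine Finset.card_le_card_of_injOn (fun j => cntU U (j:ℕ)) ?_ ?_
      · intro j hj
        have hjU := hSU hj
        simp only [hSdef, Finset.mem_coe, Finset.mem_filter] at hj
        simp only [Finset.mem_coe, Finset.mem_filter, Finset.mem_Icc]
        exact ⟨⟨cntU_pos hjU, cntU_le_card U _⟩, hj.2⟩
      · intro j hj j' hj' heq
        by_contra hne
        have hvne : (j:ℕ) ≠ (j':ℕ) := fun hv => hne (Fin.ext hv)
        rcases Nat.lt_or_ge (j:ℕ) (j':ℕ) with h | h
        · exact absurd heq (Nat.ne_of_lt (cntU_strict_mono (hSU hj) (hSU hj') h))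
        · exact absurd heq.symm
            (Nat.ne_of_lt (cntU_strict_mono (hSU hj') (hSU hj) (by omega)))
    have h2 : ((Finset.Icc 1 U.card).filter fun t => t % m = 0).card ≤ U.card / m := by
      have hinj := Finset.card_le_card_of_injOn (fun t => t / m)
        (s := (Finset.Icc 1 U.card).filter fun t => t % m = 0)
        (t := Finset.Icc 1 (U.card / m)) ?_ ?_
      · simpa [Nat.card_Icc] using hinj
      · intro t ht
        simp only [Finset.mem_coe, Finset.mem_filter, Finset.mem_Icc] at ht
        obtain ⟨⟨h1t, h2t⟩, h3t⟩ := ht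
        simp only [Finset.mem_coe, Finset.mem_Icc]
        refine ⟨?_, Nat.div_le_div_right h2t⟩
        have hmt : m ≤ t := Nat.le_of_dvd (by omega) (Nat.dvd_of_mod_eq_zero h3t)
        exact (Nat.one_le_div_iff (by omega)).mpr hmt
      · intro t ht t' ht' heq
        rw [Finset.mem_coe, Finset.mem_filter] at ht ht'
        have e1 : t = m * (t / m) := (Nat.mul_div_cancel' (Nat.dvd_of_mod_eq_zero ht.2)).symm
        have e2 : t' = m * (t' / m) := (Nat.mul_div_cancel' (Nat.dvd_of_mod_eq_zero ht'.2)).symm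
        rw [e1, e2]
        exact congrArg (fun a => m * a) heq
    calc m * S.card ≤ m * (U.card / m) := Nat.mul_le_mul_left m (h1.trans h2)
      _ ≤ U.card := Nat.mul_div_le _ _
  · -- certificate property
    intro y hyS hyU
    rw [Bool.eq_false_iff]
    intro htrue
    obtain ⟨s, hs, hwin⟩ := consecOnes_eq_true_iff.mp htrue
    by_cases hallU : ∀ r, (hr : r < m) → (⟨s+r, by omega⟩ : Fin (m^2)) ∈ U
    · -- all window positions unset: find one in S
      have hstep : ∀ r, r < m → cntU U (s + r) = cntU U s + r := by
        intro r
        induction r with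
        | zero => intro _; rfl
        | succ r ih =>
          intro hr
          have hb : s + r + 1 < m^2 := by omega
          have hmem : (⟨s + r + 1, hb⟩ : Fin (m^2)) ∈ U := hallU (r+1) hr
          have h1 := cntU_step U (s + r) hb hmem
          have h2 := ih (by omega)
          have h3 : s + (r+1) = s + r + 1 := by omega
          rw [h3, h1, h2]
          omega
      obtain ⟨r, hrm, hmod⟩ : ∃ r, r < m ∧ (cntU U s + r) % m = 0 := by
        refine ⟨(m - cntU U s % m) % m, Nat.mod_lt _ (by omega), ?_⟩
        by_cases h0 : cntU U s % m = 0
        · rw [h0, Nat.sub_zero, Nat.mod_self, Nat.add_zero]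
          exact h0
        · have hk : cntU U s % m < m := Nat.mod_lt _ (by omega)
          have hd : m * (cntU U s / m) + cntU U s % m = cntU U s := Nat.div_add_mod _ _
          rw [Nat.mod_eq_of_lt (show m - cntU U s % m < m by omega)]
          have he : cntU U s + (m - cntU U s % m) = m * (cntU U s / m + 1) := by
            rw [Nat.mul_add, Nat.mul_one]
            omega
          rw [he, Nat.mul_mod_right]
      have hjb : s + r < m^2 := by omega
      have hjU : (⟨s + r, hjb⟩ : Fin (m^2)) ∈ U := hallU r hrm
      have hjS : (⟨s + r, hjb⟩ : Fin (m^2)) ∈ S := by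
        simp only [hSdef, Finset.mem_filter]
        refine ⟨hjU, ?_⟩
        show cntU U (s + r) % m = 0
        rw [hstep r hrm]
        exact hmod
      have hyv : y ⟨s + r, hjb⟩ = false := by rw [hyS _ hjS, hall]
      have := (hwin ⟨s + r, hjb⟩).mpr (by simp only [Fin.val_mk]; omega)
      rw [hyv] at this
      exact Bool.false_ne_true this
    · -- some window position is set (to 0)
      push_neg at hallU
      obtain ⟨r, hr, hnU⟩ := hallU
      have hyv : y ⟨s + r, by omega⟩ = false := by rw [hyU _ hnU, hall]
      have := (hwin ⟨s + r, by omega⟩).mpr (by simp only [Fin.val_mk]; omega)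
      rw [hyv] at this
      exact Bool.false_ne_true this

end RowCert
section RowCertOne
variable {m : ℕ}

/-- Certificate of size ≤ 3 for a 0-row of `consecOnes` containing a one. -/
lemma row_cert_one (hm : 1 ≤ m) (w : Fin (m^2) → Bool)
    (hw : consecOnes m w = false) (hone : ∃ p, w p = true) :
    ∃ P : Finset (Fin (m^2)), P.card ≤ 3 ∧
      ∀ y : Fin (m^2) → Bool, (∀ j ∈ P, y j = w j) → consecOnes m y = false := by
  classical
  set T : Finset (Fin (m^2)) := Finset.univ.filter (fun p => w p = true) with hT
  have hTne : T.Nonempty := by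
    obtain ⟨p, hp⟩ := hone
    exact ⟨p, by simp [hT, hp]⟩
  set p : Fin (m^2) := T.min' hTne with hpdef
  have hpw : w p = true := (Finset.mem_filter.mp (T.min'_mem hTne)).2
  have hpmin : ∀ q : Fin (m^2), (q:ℕ) < (p:ℕ) → w q = false := by
    intro q hq
    by_contra hqw
    have hqT : q ∈ T := by
      simp only [hT, Finset.mem_filter, Finset.mem_univ, true_and]
      exact Bool.not_eq_false _ |>.mp hqw
    have := T.min'_le q hqT
    rw [← hpdef] at this
    exact absurd (Fin.le_def.mp this) (by omega)
  -- the three positions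
  set Pm : Finset (Fin (m^2)) :=
    if hp : 0 < (p:ℕ) then {(⟨(p:ℕ)-1, by have := p.isLt; omega⟩ : Fin (m^2))} else ∅
    with hPm
  set W : Finset (Fin (m^2)) :=
    if h : ∃ q : Fin (m^2), ¬(w q = true ↔ (p:ℕ) ≤ (q:ℕ) ∧ (q:ℕ) < (p:ℕ) + m)
    then {h.choose} else ∅ with hW
  refine ⟨insert p (Pm ∪ W), ?_, ?_⟩
  · have h1 : (Pm ∪ W).card ≤ Pm.card + W.card := Finset.card_union_le _ _
    have h2 : Pm.card ≤ 1 := by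
      rw [hPm]; split <;> simp
    have h3 : W.card ≤ 1 := by
      rw [hW]; split <;> simp
    have h4 := Finset.card_insert_le p (Pm ∪ W)
    omega
  · intro y hy
    rw [Bool.eq_false_iff]
    intro htrue
    obtain ⟨s, hs, hwin⟩ := consecOnes_eq_true_iff.mp htrue
    have hyp : y p = true := by
      rw [hy p (Finset.mem_insert_self _ _), hpw]
    have h1 := (hwin p).mp hyp
    -- show s = p
    have hsp : s = (p:ℕ) := by
      rcases Nat.eq_zero_or_pos (p:ℕ) with h0 | h0
      · omega
      · set q : Fin (m^2) := ⟨(p:ℕ)-1, by have := p.isLt; omega⟩ with hq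
        have hqP : q ∈ insert p (Pm ∪ W) := by
          apply Finset.mem_insert_of_mem
          apply Finset.mem_union_left
          rw [hPm, dif_pos h0]
          exact Finset.mem_singleton_self _
        have hyq : y q = false := by
          rw [hy q hqP]
          exact hpmin q (by simp [hq]; omega)
        have hnb : ¬(s ≤ (q:ℕ) ∧ (q:ℕ) < s + m) := by
          intro hb
          rw [(hwin q).mpr hb] at hyq
          exact Bool.false_ne_true hyq.symm

        have hqv : (q:ℕ) = (p:ℕ) - 1 := rfl
        omega
    -- the window at p exists for y, so there must be a witness position
    have hex : ∃ q : Fin (m^2), ¬(w q = true ↔ (p:ℕ) ≤ (q:ℕ) ∧ (q:ℕ) < (p:ℕ) + m) := by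
      by_contra hq
      push_neg at hq
      rw [Bool.eq_false_iff] at hw
      exact hw (consecOnes_eq_true_iff.mpr ⟨(p:ℕ), by omega, fun j => hq j⟩)
    have hWeq : W = {hex.choose} := by rw [hW, dif_pos hex]
    have hqP : hex.choose ∈ insert p (Pm ∪ W) := by
      apply Finset.mem_insert_of_mem
      apply Finset.mem_union_right
      rw [hWeq]
      exact Finset.mem_singleton_self _
    have hyq : y hex.choose = w hex.choose := hy _ hqP
    have hspec := hex.choose_spec
    apply hspec
    rw [← hyq, hwin hex.choose, hsp]

end RowCertOne
section Global
variable {m : ℕ}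

lemma row_cert (hm : 1 ≤ m) (w : Fin (m^2) → Bool) (U : Finset (Fin (m^2)))
    (hw : consecOnes m w = false) :
    ∃ S : Finset (Fin (m^2)), S ⊆ U ∧ (S.card ≤ 3 ∨ m * S.card ≤ U.card) ∧
      ∀ y : Fin (m^2) → Bool, (∀ j ∈ S, y j = w j) → (∀ j ∉ U, y j = w j) →
        consecOnes m y = false := by
  classical
  by_cases hone : ∃ p, w p = true
  · obtain ⟨P, hPcard, hPcert⟩ := row_cert_one hm w hw hone
    refine ⟨P ∩ U, Finset.inter_subset_right, Or.inl ?_, ?_⟩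
    · exact le_trans (Finset.card_le_card Finset.inter_subset_left) hPcard
    · intro y hyS hyU
      apply hPcert
      intro j hj
      by_cases hU : j ∈ U
      · exact hyS j (Finset.mem_inter.mpr ⟨hj, hU⟩)
      · exact hyU j hU
  · push_neg at hone
    obtain ⟨S, h1, h2, h3⟩ := row_cert_zero hm w U
      (fun p => Bool.eq_false_iff.mpr (hone p))
    exact ⟨S, h1, Or.inr h2, h3⟩

lemma fiber_eq (U : Finset (Fin (m^2) × Fin (m^2))) (i : Fin (m^2)) :
    U.filter (fun p => p.1 = i)
      = (Finset.univ.filter fun j : Fin (m^2) => (i, j) ∈ U).image (fun j => (i, j)) := by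
  ext ⟨a, b⟩
  simp only [Finset.mem_filter, Finset.mem_image, Finset.mem_univ, true_and]
  constructor
  · rintro ⟨hab, rfl⟩
    exact ⟨b, hab, rfl⟩
  · rintro ⟨j, hj, hji⟩
    cases hji
    exact ⟨hj, rfl⟩

lemma mk_injective (i : Fin (m^2)) :
    Function.Injective (fun j : Fin (m^2) => (i, j)) := by
  intro a b h
  exact congrArg Prod.snd h

lemma global_cert (hm : 3 ≤ m) (z : Fin (m^2) × Fin (m^2) → Bool)
    (U : Finset (Fin (m^2) × Fin (m^2))) :
    ∃ S, S ⊆ U ∧ S.card ≤ m^2 * m ∧ m * S.card ≤ 4 * (m^2 * m) + U.card ∧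
      ∀ y : Fin (m^2) × Fin (m^2) → Bool,
        (∀ p ∈ S, y p = z p) → (∀ p ∉ U, y p = z p) →
        modRub m y = modRub m z := by
  classical
  have hm1 : 1 ≤ m := by omega
  have hmm : m * m^2 = m^2 * m := mul_comm _ _
  by_cases hz : modRub m z = true
  · obtain ⟨i₀, hi₀⟩ := modRub_eq_true_iff.mp hz
    have hc : (U.filter (fun p => p.1 = i₀)).card ≤ m^2 := by
      rw [fiber_eq]
      refine le_trans Finset.card_image_le (le_trans (Finset.card_filter_le _ _) ?_)
      simp
    refine ⟨U.filter (fun p => p.1 = i₀), Finset.filter_subset _ _, ?_, ?_, ?_⟩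
    · calc (U.filter (fun p => p.1 = i₀)).card ≤ m^2 := hc
        _ ≤ m^2 * m := Nat.le_mul_of_pos_right _ (by omega)
    · have h1 : m * (U.filter (fun p => p.1 = i₀)).card ≤ m * m^2 :=
        Nat.mul_le_mul_left m hc
      omega
    · intro y hyS hyU
      have hrow : (fun j => y (i₀, j)) = (fun j => z (i₀, j)) := by
        funext j
        by_cases hU : (i₀, j) ∈ U
        · exact hyS _ (Finset.mem_filter.mpr ⟨hU, rfl⟩)
        · exact hyU _ hU
      rw [hz, modRub_eq_true_iff]
      exact ⟨i₀, by rw [hrow]; exact hi₀⟩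
  · have hz' : modRub m z = false := Bool.eq_false_iff.mpr hz
    have hrows : ∀ i, consecOnes m (fun j => z (i, j)) = false := by
      intro i
      rw [Bool.eq_false_iff]
      intro h
      exact hz (modRub_eq_true_iff.mpr ⟨i, h⟩)
    have hrc := fun i => row_cert hm1 (fun j => z (i, j))
        (Finset.univ.filter fun j => (i, j) ∈ U) (hrows i)
    choose T hT1 hT2 hT3 using hrc
    set S := Finset.univ.biUnion (fun i => (T i).image (fun j => (i, j))) with hSdef
    have hScard : S.card ≤ ∑ i, (T i).card :=
      le_trans (Finset.card_biUnion_le)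
        (Finset.sum_le_sum fun i _ => Finset.card_image_le)
    have hUi_le : ∀ i, (Finset.univ.filter fun j : Fin (m^2) => (i, j) ∈ U).card ≤ m^2 := by
      intro i
      refine le_trans (Finset.card_filter_le _ _) ?_
      simp
    have hfib : ∀ i, (Finset.univ.filter fun j : Fin (m^2) => (i, j) ∈ U).card
        = (U.filter (fun p => p.1 = i)).card := by
      intro i
      rw [fiber_eq, Finset.card_image_of_injective _ (mk_injective i)]
    have hUsum : ∑ i, (Finset.univ.filter fun j : Fin (m^2) => (i, j) ∈ U).card = U.card := by
      rw [Finset.sum_congr rfl fun i _ => hfib i]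
      exact (Finset.card_eq_sum_card_fiberwise (f := Prod.fst) (s := U)
        (t := Finset.univ) fun x _ => Finset.mem_univ _).symm
    have hSsub : S ⊆ U := by
      intro p hp
      rw [hSdef] at hp
      obtain ⟨i, _, hp⟩ := Finset.mem_biUnion.mp hp
      obtain ⟨j, hj, rfl⟩ := Finset.mem_image.mp hp
      have := hT1 i hj
      simpa using this
    refine ⟨S, hSsub, ?_, ?_, ?_⟩
    · have hper : ∀ i, (T i).card ≤ m := by
        intro i
        rcases hT2 i with h | h
        · omega
        · have h2 : m * (T i).card ≤ m * m := by
            have := hUi_le i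
            have hsq : m^2 = m * m := sq m
            omega
          exact Nat.le_of_mul_le_mul_left h2 (by omega)
      calc S.card ≤ ∑ i, (T i).card := hScard
        _ ≤ ∑ _i : Fin (m^2), m := Finset.sum_le_sum fun i _ => hper i
        _ = m^2 * m := by simp [Finset.sum_const, mul_comm]
    · have hper : ∀ i, m * (T i).card
          ≤ 3 * m + (Finset.univ.filter fun j : Fin (m^2) => (i, j) ∈ U).card := by
        intro i
        rcases hT2 i with h | h
        · have : m * (T i).card ≤ m * 3 := Nat.mul_le_mul_left m h
          omega
        · omega
      calc m * S.card ≤ m * ∑ i, (T i).card := Nat.mul_le_mul_left m hScard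
        _ = ∑ i, m * (T i).card := Finset.mul_sum _ _ _
        _ ≤ ∑ i, (3 * m + (Finset.univ.filter fun j : Fin (m^2) => (i, j) ∈ U).card) :=
            Finset.sum_le_sum fun i _ => hper i
        _ = (∑ _i : Fin (m^2), 3 * m) + U.card := by rw [Finset.sum_add_distrib, hUsum]
        _ = m^2 * (3 * m) + U.card := by simp [Finset.sum_const, mul_comm]
        _ ≤ 4 * (m^2 * m) + U.card := by
            have h1 : m^2 * (3 * m) ≤ 4 * (m^2 * m) := by
              have : m^2 * (3 * m) = 3 * (m^2 * m) := by ring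
              omega
            omega
    · intro y hyS hyU
      rw [hz', Bool.eq_false_iff]
      intro htrue
      obtain ⟨i, hi⟩ := modRub_eq_true_iff.mp htrue
      have := hT3 i (fun j => y (i, j)) ?_ ?_
      · rw [this] at hi
        exact Bool.false_ne_true hi
      · intro j hj
        refine hyS (i, j) ?_
        rw [hSdef]
        exact Finset.mem_biUnion.mpr ⟨i, Finset.mem_univ _,
          Finset.mem_image_of_mem _ hj⟩
      · intro j hj
        apply hyU
        intro hU
        exact hj (Finset.mem_filter.mpr ⟨Finset.mem_univ _, hU⟩)

end Global
section Assembly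
variable {m : ℕ}

/-- Uniform upper bound on certificate complexity of `modRub`. -/
lemma modRub_certAt_ub (hm : 3 ≤ m) (z : Fin (m^2) × Fin (m^2) → Bool) :
    certAt (modRub m) z ≤ m^2 * m := by
  obtain ⟨S, _, hS1, _, hcert⟩ := global_cert hm z Finset.univ
  refine le_trans (certAt_le_of_isCert ?_) hS1
  intro y hy
  exact hcert y hy (fun p hp => absurd (Finset.mem_univ p) hp)

/-- Restricted certificate bound. -/
lemma modRub_restrict_certAt_ub (hm : 3 ≤ m) (ρ : Fin (m^2) × Fin (m^2) → Option Bool)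
    (x : Fin (m^2) × Fin (m^2) → Bool) :
    m * certAt (restrictBF (modRub m) ρ) x ≤ 4 * (m^2 * m) + unsetCard ρ := by
  classical
  set U : Finset (Fin (m^2) × Fin (m^2)) := Finset.univ.filter (fun p => ρ p = none)
    with hUdef
  have hUcard : U.card = unsetCard ρ := rfl
  set z : Fin (m^2) × Fin (m^2) → Bool := fun p => (ρ p).getD (x p) with hzdef
  obtain ⟨S, hSU, _, hS2, hcert⟩ := global_cert hm z U
  have hIsCert : IsCert (restrictBF (modRub m) ρ) x S := by
    intro y hy
    show modRub m (fun p => (ρ p).getD (y p)) = modRub m (fun p => (ρ p).getD (x p))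
    apply hcert
    · intro p hp
      have hpU : p ∈ U := hSU hp
      rw [hUdef, Finset.mem_filter] at hpU
      rw [hpU.2]
      simp only [Option.getD_none]
      rw [hy p hp]
      simp [hzdef, hpU.2]
    · intro p hp
      rw [hUdef, Finset.mem_filter] at hp
      push_neg at hp
      have := hp (Finset.mem_univ p)
      cases hρ : ρ p with
      | none => exact absurd hρ this
      | some b => simp [hzdef, hρ]
  calc m * certAt (restrictBF (modRub m) ρ) x
      ≤ m * S.card := Nat.mul_le_mul_left m (certAt_le_of_isCert hIsCert)
    _ ≤ 4 * (m^2 * m) + U.card := hS2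
    _ = 4 * (m^2 * m) + unsetCard ρ := by rw [hUcard]

lemma modRub_lower (hm : 3 ≤ m) :
    m^2 * m ≤ bsAt (modRub m) (fun _ => false) ∧
    ((m^2 * m : ℕ) : ℝ) ≤ fbsAt (modRub m) (fun _ => false) := by
  obtain ⟨B, hsens, hdisj⟩ := modRub_blocks (show 1 ≤ m by omega)
  exact ⟨certAt_le_bsAt_lower B hsens hdisj, certAt_le_fbsAt_lower B hsens hdisj⟩

end Assembly

/-- the modified Rubinstein function `f` on `n = k²` variables
(`k = m²`) has `bs(f) = fbs(f) = C(f) = k^{3/2} = m³`, yet every restriction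
leaving at most `c·m³` variables unset has `C(f|_ρ) = O(k) = O(m²)`. Hence
`bs`, `fbs` and `C` cannot be condensed losslessly. -/
theorem modRub_not_losslessly_condensable :
    ∀ c : ℝ, 0 < c → ∃ C₀ : ℝ, 0 < C₀ ∧ ∀ m : ℕ, 3 ≤ m →
      blockSens (modRub m) = m ^ 2 * m ∧
      fbs (modRub m) = ((m : ℝ) ^ 2 * m) ∧
      certC (modRub m) = m ^ 2 * m ∧
      ∀ ρ : Fin (m ^ 2) × Fin (m ^ 2) → Option Bool,
        (unsetCard ρ : ℝ) ≤ c * ((m : ℝ) ^ 2 * m) →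
        (certC (restrictBF (modRub m) ρ) : ℝ) ≤ C₀ * (m : ℝ) ^ 2 := by
  intro c hc
  refine ⟨c + 4, by linarith, ?_⟩
  intro m hm
  have hm0 : (0:ℝ) < (m:ℝ) := by
    have : (3:ℝ) ≤ (m:ℝ) := by exact_mod_cast hm
    linarith
  set x₀ : Fin (m^2) × Fin (m^2) → Bool := fun _ => false with hx₀
  obtain ⟨hbs0, hfbs0⟩ := modRub_lower hm
  have hub := modRub_certAt_ub hm
  refine ⟨?_, ?_, ?_, ?_⟩
  · -- block sensitivity
    apply le_antisymm
    · exact Finset.sup_le fun x _ => le_trans (bsAt_le_certAt _ _) (hub x)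
    · exact le_trans hbs0 (Finset.le_sup (Finset.mem_univ x₀))
  · -- fractional block sensitivity
    have hcast : ((m^2 * m : ℕ) : ℝ) = (m:ℝ)^2 * m := by push_cast; ring
    apply le_antisymm
    · apply Finset.sup'_le
      intro x _
      refine le_trans (fbsAt_le_certAt _ _) ?_
      rw [← hcast]
      exact_mod_cast hub x
    · rw [← hcast]
      exact le_trans hfbs0 (Finset.le_sup' (fbsAt (modRub m)) (Finset.mem_univ x₀))
  · -- certificate complexity
    apply le_antisymm
    · exact Finset.sup_le fun x _ => hub x
    · refine le_trans (le_trans hbs0 (bsAt_le_certAt _ _)) ?_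
      exact Finset.le_sup (Finset.mem_univ x₀)
  · -- restrictions
    intro ρ hρ
    have hne : Nonempty (Fin (m^2) × Fin (m^2)) :=
      ⟨(⟨0, by positivity⟩, ⟨0, by positivity⟩)⟩
    obtain ⟨xmax, _, hxmax⟩ := Finset.exists_mem_eq_sup Finset.univ
      Finset.univ_nonempty (fun x => certAt (restrictBF (modRub m) ρ) x)
    have hnat := modRub_restrict_certAt_ub hm ρ xmax
    have hreal : (m:ℝ) * (certC (restrictBF (modRub m) ρ) : ℝ)
        ≤ 4 * ((m:ℝ)^2 * m) + (unsetCard ρ : ℝ) := by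
      have : (certC (restrictBF (modRub m) ρ) : ℕ)
          = certAt (restrictBF (modRub m) ρ) xmax := hxmax
      rw [show certC (restrictBF (modRub m) ρ)
          = certAt (restrictBF (modRub m) ρ) xmax from hxmax]
      have := hnat
      push_cast
      exact_mod_cast Nat.cast_le.mpr hnat |>.trans (by push_cast; linarith)
    nlinarith [hreal, hρ, hm0]
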